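/- In the construction of the weight-tied network of the universality theorem (block subdiagonal-shift linear map W_z with blocks W², …, W^{k}, input injection W_x placing W¹ x in the first block, bias b̃ = (b¹, …, b^{k}), and blockwise nonlinearity σ = (σ¹, …, σ^{k})), the following invariant holds for every 1 ≤ i ≤ k and every initialization z̃^{[1]} ∈ V: the i-th iterate z̃^{[i+1]} of the update z̃ ↦ σ(W_z z̃ + W_x x + b̃) has its j-th block equal to z^{j+1} (the (j+1)-st hidden layer of the original k-layer network z² = σ¹(W¹ x + b¹), z^{i+1} = σ^{i}(W^{i} z^{i} + b^{i})) for all 1 ≤ j ≤ i. -/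
import Mathlib


/-- The original `k`-layer network: `origNet … i` is the hidden layer
`z^{i+2}` of the paper's notation, i.e. `origNet … 0 = z² = σ¹(W¹ x + b¹)`
and `origNet … (i+1) = σ^{i+2}(W^{i+2} (origNet … i) + b^{i+2})`. -/
def origNet (dims : ℕ → ℕ)
    (W : (i : ℕ) → Matrix (Fin (dims (i + 1))) (Fin (dims i)) ℝ)
    (b : (i : ℕ) → Fin (dims (i + 1)) → ℝ)
    (σ : (i : ℕ) → (Fin (dims (i + 1)) → ℝ) → (Fin (dims (i + 1)) → ℝ))
    (x : Fin (dims 0) → ℝ) : (i : ℕ) → Fin (dims (i + 1)) → ℝ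
  | 0 => σ 0 ((W 0).mulVec x + b 0)
  | (i + 1) => σ (i + 1) ((W (i + 1)).mulVec (origNet dims W b σ x i) + b (i + 1))

/-- One step `z̃ ↦ σ(W_z z̃ + W_x x + b̃)` of the weight-tied, input-injected
network built from the block subdiagonal-shift matrix `W_z` (blocks
`W², …, W^k`), input injection `W_x` placing `W¹ x` in the first block, bias
`b̃ = (b¹, …, b^k)`, and blockwise nonlinearity `σ = (σ¹, …, σ^k)`. -/
def tiedStep (k : ℕ) (dims : ℕ → ℕ)
    (W : (i : ℕ) → Matrix (Fin (dims (i + 1))) (Fin (dims i)) ℝ)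
    (b : (i : ℕ) → Fin (dims (i + 1)) → ℝ)
    (σ : (i : ℕ) → (Fin (dims (i + 1)) → ℝ) → (Fin (dims (i + 1)) → ℝ))
    (x : Fin (dims 0) → ℝ)
    (v : (i : Fin k) → Fin (dims (i.1 + 1)) → ℝ) :
    (i : Fin k) → Fin (dims (i.1 + 1)) → ℝ
  | ⟨0, _⟩ => σ 0 ((W 0).mulVec x + b 0)
  | ⟨j + 1, h⟩ => σ (j + 1) ((W (j + 1)).mulVec (v ⟨j, by omega⟩) + b (j + 1))

/-- Inductive invariant for the weight-tied universality construction: for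
every `1 ≤ i ≤ k` and every initialization `z̃^{[1]}`, the `i`-th iterate of
the weight-tied update has its `j`-th block (for `1 ≤ j ≤ i`) equal to the
original network's hidden layer `z^{j+1}` (which is `origNet … (j-1)` in the
0-based encoding). -/
theorem weight_tied_invariant (k : ℕ) (dims : ℕ → ℕ)
    (W : (i : ℕ) → Matrix (Fin (dims (i + 1))) (Fin (dims i)) ℝ)
    (b : (i : ℕ) → Fin (dims (i + 1)) → ℝ)
    (σ : (i : ℕ) → (Fin (dims (i + 1)) → ℝ) → (Fin (dims (i + 1)) → ℝ))
    (x : Fin (dims 0) → ℝ)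
    (zinit : (i : Fin k) → Fin (dims (i.1 + 1)) → ℝ) :
    ∀ (i : ℕ) (_ : 1 ≤ i) (_ : i ≤ k) (j : ℕ) (_ : 1 ≤ j) (hji : j ≤ i),
      ((tiedStep k dims W b σ x)^[i] zinit) ⟨j - 1, by omega⟩ =
        origNet dims W b σ x (j - 1) := by
  intro i
  induction i with
  | zero => intro h; omega
  | succ n ih =>
    intro _ hik j hj hji
    rw [Function.iterate_succ_apply']
    match j, hj with
    | 1, _ =>
      simp only [Nat.sub_self]
      rfl
    | j + 2, _ =>
      have hkey : ((tiedStep k dims W b σ x)^[n] zinit) ⟨j, by omega⟩ =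
          origNet dims W b σ x j := by
        have := ih (by omega) (by omega) (j + 1) (by omega) (by omega)
        simpa using this
      show σ (j + 1) ((W (j + 1)).mulVec
          (((tiedStep k dims W b σ x)^[n] zinit) ⟨j, by omega⟩) + b (j + 1)) =
        origNet dims W b σ x (j + 1)
      rw [hkey]
      rfl
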